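/- Let λ, λ' ≥ 0, θ, θ' ∈ ℝ^d, and let g ∈ ∂‖·‖₁(θ), g' ∈ ∂‖·‖₁(θ'). Then ⟨λ'g' − λg, θ' − θ⟩ ≥ (λ' − λ)(‖θ'‖₁ − ‖θ‖₁). -/
import Mathlib

open scoped RealInnerProductSpace BigOperators

noncomputable def l1 {d : ℕ} (x : EuclideanSpace ℝ (Fin d)) : ℝ := ∑ i, |x i|

def IsL1Subgradient {d : ℕ} (g θ : EuclideanSpace ℝ (Fin d)) : Prop :=
  ∀ w : EuclideanSpace ℝ (Fin d), l1 θ + ⟪g, w - θ⟫ ≤ l1 w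

/-- Monotonicity-type estimate for ℓ1 subgradients with varying regularization weights:
`⟨λ'g' − λg, θ' − θ⟫ ≥ (λ' − λ)(‖θ'‖₁ − ‖θ‖₁)`. -/
theorem l1_subgradient_monotone {d : ℕ} (lam lam' : ℝ) (hlam : 0 ≤ lam) (hlam' : 0 ≤ lam')
    (θ θ' g g' : EuclideanSpace ℝ (Fin d))
    (hg : IsL1Subgradient g θ) (hg' : IsL1Subgradient g' θ') :
    (lam' - lam) * (l1 θ' - l1 θ) ≤ ⟪lam' • g' - lam • g, θ' - θ⟫ := by
  have h1 := hg θ'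
  have h2 := hg' θ
  have e1 : ⟪g', θ - θ'⟫ = -⟪g', θ' - θ⟫ := by
    rw [← inner_neg_right]; congr 1; abel
  rw [e1] at h2
  rw [inner_sub_left, inner_smul_left, inner_smul_left]
  simp only [starRingEnd_apply, star_trivial] at *
  nlinarith [mul_le_mul_of_nonneg_left h1 hlam, mul_le_mul_of_nonneg_left h2 hlam']
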